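/- The real line ℝ ℓ-dominates a Tychonoff space X if X is submetrizable and has a k_ω sequence (K_n)_n such that each K_n is ℓ-dominated by the closed unit interval I = [0,1]. -/

import Mathlib

open Set Function

noncomputable section

/-- Topology of pointwise convergence on `C(X, ℝ)`. -/
def ptTop (X : Type*) [TopologicalSpace X] : TopologicalSpace C(X, ℝ) :=
  TopologicalSpace.induced (fun f => (f : X → ℝ)) Pi.topologicalSpace

/-- `X` ℓ-dominates `Y`: a continuous linear map of `C_p(X)` onto `C_p(Y)`. -/
def LDominates (X Y : Type*) [TopologicalSpace X] [TopologicalSpace Y] : Prop :=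
  ∃ L : C(X, ℝ) →ₗ[ℝ] C(Y, ℝ), @Continuous _ _ (ptTop X) (ptTop Y) L ∧ Surjective L

/-- Covering dimension at most `n`. -/
def CovDimLE (X : Type*) [TopologicalSpace X] (n : ℕ) : Prop :=
  ∀ (ι : Type) (U : ι → Set X), Finite ι → (∀ i, IsOpen (U i)) → (⋃ i, U i) = univ →
    ∃ V : ι → Set X, (∀ i, IsOpen (V i)) ∧ (∀ i, V i ⊆ U i) ∧ (⋃ i, V i) = univ ∧
      ∀ x : X, {i | x ∈ V i}.ncard ≤ n + 1

/-- Finite (covering) dimensional space. -/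
def FinDimSpace (X : Type*) [TopologicalSpace X] : Prop := ∃ n : ℕ, CovDimLE X n

/-- Strongly countable dimensional space. -/
def StronglyCountableDim (X : Type*) [TopologicalSpace X] : Prop :=
  ∃ F : ℕ → Set X, (∀ n, IsClosed (F n)) ∧ (∀ n, FinDimSpace ↥(F n)) ∧ (⋃ n, F n) = univ

/-- `I(S)` relative to a subset: points of `S` with a relatively open
finite dimensional neighbourhood in `S`. -/
def fdI (X : Type*) [TopologicalSpace X] (S : Set X) : Set X :=
  {x | x ∈ S ∧ ∃ U : Set X, IsOpen U ∧ x ∈ U ∧ FinDimSpace ↥(U ∩ S)}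

/-- The transfinite derived sets `K^[α]`. -/
def fdDerived (X : Type*) [TopologicalSpace X] : Ordinal → Set X := fun o =>
  Ordinal.limitRecOn o (univ : Set X)
    (fun _ S => S \ fdI X S)
    (fun o _ ih => ⋂ (o' : Ordinal) (h : o' < o), ih o' h)

/-- A k_ω sequence for `X`. -/
def IsKOmegaSeq (X : Type*) [TopologicalSpace X] (K : ℕ → Set X) : Prop :=
  (∀ n, IsCompact (K n)) ∧ (∀ n, K n ⊆ K (n + 1)) ∧
  (∀ C : Set X, IsCompact C → ∃ n, C ⊆ K n) ∧
  (∀ A : Set X, (∀ n, ∃ F : Set X, IsClosed F ∧ A ∩ K n = F ∩ K n) → IsClosed A)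

def KOmegaSpace (X : Type*) [TopologicalSpace X] : Prop := ∃ K : ℕ → Set X, IsKOmegaSeq X K

/-- Submetrizable: there is a coarser metrizable topology. -/
def Submetrizable (X : Type*) [TopologicalSpace X] : Prop :=
  ∃ t' : TopologicalSpace X, (∀ s : Set X, @IsOpen X t' s → IsOpen s) ∧
    @TopologicalSpace.MetrizableSpace X t'

def Hemicompact (X : Type*) [TopologicalSpace X] : Prop :=
  ∃ K : ℕ → Set X, (∀ n, IsCompact (K n)) ∧ ∀ C : Set X, IsCompact C → ∃ n, C ⊆ K n

/-- `B` is (functionally) bounded in `X`. -/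
def CBounded (X : Type*) [TopologicalSpace X] (B : Set X) : Prop :=
  ∀ f : C(X, ℝ), ∃ M : ℝ, ∀ x ∈ B, |f x| ≤ M

/-- μ-space: closed bounded subsets are compact. -/
def MuSpace (X : Type*) [TopologicalSpace X] : Prop :=
  ∀ B : Set X, IsClosed B → CBounded X B → IsCompact B

/-- `C(K; A)`: continuous functions vanishing on `A`, as a submodule. -/
def Czero (K : Type*) [TopologicalSpace K] (A : Set K) : Submodule ℝ C(K, ℝ) where
  carrier := {f | ∀ x ∈ A, f x = 0}
  add_mem' := by intro f g hf hg x hx; simp [hf x hx, hg x hx]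
  zero_mem' := by intro x hx; simp
  smul_mem' := by intro c f hf x hx; simp [hf x hx]

/-- Pointwise topology on `C(K;A)`. -/
def ptTopSub {K : Type*} [TopologicalSpace K] (A : Set K) :
    TopologicalSpace (Czero K A) :=
  TopologicalSpace.induced (fun f => (f : C(K, ℝ))) (ptTop K)

/-- `c`-good map between relative function spaces. -/
def IsCGood {K₁ K₂ : Type*} [TopologicalSpace K₁] [CompactSpace K₁]
    [TopologicalSpace K₂] [CompactSpace K₂] (A₁ : Set K₁) (A₂ : Set K₂) (c : ℝ)
    (L : Czero K₁ A₁ →ₗ[ℝ] Czero K₂ A₂) : Prop :=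
  @Continuous _ _ (ptTopSub A₁) (ptTopSub A₂) L ∧
  (∀ g : Czero K₁ A₁, ‖(L g : C(K₂, ℝ))‖ ≤ ‖(g : C(K₁, ℝ))‖) ∧
  (∀ f : Czero K₂ A₂, ∃ g : Czero K₁ A₁, L g = f ∧
    ‖(g : C(K₁, ℝ))‖ ≤ c * ‖(f : C(K₂, ℝ))‖)

/-- `c`-good map between full function spaces. -/
def IsCGoodMap {K₁ K₂ : Type*} [TopologicalSpace K₁] [CompactSpace K₁]
    [TopologicalSpace K₂] [CompactSpace K₂] (c : ℝ)
    (L : C(K₁, ℝ) →ₗ[ℝ] C(K₂, ℝ)) : Prop :=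
  @Continuous _ _ (ptTop K₁) (ptTop K₂) L ∧
  (∀ g : C(K₁, ℝ), ‖L g‖ ≤ ‖g‖) ∧
  (∀ f : C(K₂, ℝ), ∃ g : C(K₁, ℝ), L g = f ∧ ‖g‖ ≤ c * ‖f‖)


namespace Stmt9

open Metric

lemma contComp {α β γ : Type*} {tα : TopologicalSpace α} {tβ : TopologicalSpace β}
    {tγ : TopologicalSpace γ} {g : β → γ} {f : α → β}
    (hg : @Continuous _ _ tβ tγ g) (hf : @Continuous _ _ tα tβ f) :
    @Continuous _ _ tα tγ (g ∘ f) := hg.comp hf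

lemma contAdd {α : Type*} {tα : TopologicalSpace α} {f g : α → ℝ}
    (hf : @Continuous _ _ tα _ f) (hg : @Continuous _ _ tα _ g) :
    @Continuous _ _ tα _ (fun x => f x + g x) := hf.add hg

lemma contSub {α : Type*} {tα : TopologicalSpace α} {f g : α → ℝ}
    (hf : @Continuous _ _ tα _ f) (hg : @Continuous _ _ tα _ g) :
    @Continuous _ _ tα _ (fun x => f x - g x) := hf.sub hg

lemma ptCont_iff {A : Type*} [TopologicalSpace A] {Z : Type*} {tZ : TopologicalSpace Z}
    (F : Z → C(A, ℝ)) :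
    @Continuous _ _ tZ (ptTop A) F ↔ ∀ a : A, Continuous fun z => F z a := by
  rw [ptTop, continuous_induced_rng]
  exact continuous_pi_iff

lemma evalCont {A : Type*} [TopologicalSpace A] (a : A) :
    @Continuous _ _ (ptTop A) _ fun f : C(A, ℝ) => f a :=
  (@ptCont_iff A _ C(A,ℝ) (ptTop A) id).1 (@continuous_id _ (ptTop A)) a

def pullbackL {A B : Type*} [TopologicalSpace A] [TopologicalSpace B] (φ : C(A, B)) :
    C(B, ℝ) →ₗ[ℝ] C(A, ℝ) where
  toFun f := f.comp φ
  map_add' f g := rfl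
  map_smul' c f := rfl

@[simp] lemma pullbackL_apply {A B : Type*} [TopologicalSpace A] [TopologicalSpace B]
    (φ : C(A, B)) (f : C(B, ℝ)) (a : A) : pullbackL φ f a = f (φ a) := rfl

lemma pullbackL_ptCont {A B : Type*} [TopologicalSpace A] [TopologicalSpace B] (φ : C(A, B)) :
    @Continuous _ _ (ptTop B) (ptTop A) (pullbackL φ) := by
  letI := ptTop B
  rw [ptCont_iff]
  intro a
  exact evalCont (φ a)

/-- tent function: 1 on [2n, 2n+1], 0 outside (2n-1, 2n+2). -/
def tent (n : ℕ) : ℝ → ℝ := fun t => min 1 (max 0 (min (t - (2*(n:ℝ) - 1)) (2*(n:ℝ) + 2 - t)))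

lemma tent_continuous (n : ℕ) : Continuous (tent n) := by
  unfold tent; fun_prop

lemma tent_eq_one {n : ℕ} {t : ℝ} (h1 : 2*(n:ℝ) ≤ t) (h2 : t ≤ 2*(n:ℝ) + 1) :
    tent n t = 1 := by
  have ha : (1:ℝ) ≤ t - (2*(n:ℝ) - 1) := by linarith
  have hb : (1:ℝ) ≤ 2*(n:ℝ) + 2 - t := by linarith
  have : (1:ℝ) ≤ min (t - (2*(n:ℝ) - 1)) (2*(n:ℝ) + 2 - t) := le_min ha hb
  unfold tent
  rw [max_eq_right (le_trans zero_le_one this)]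
  exact min_eq_left this

lemma tent_eq_zero_left {n : ℕ} {t : ℝ} (h : t ≤ 2*(n:ℝ) - 1) : tent n t = 0 := by
  unfold tent
  rw [max_eq_left, min_eq_right zero_le_one]
  exact le_trans (min_le_left _ _) (by linarith)

lemma tent_eq_zero_right {n : ℕ} {t : ℝ} (h : 2*(n:ℝ) + 2 ≤ t) : tent n t = 0 := by
  unfold tent
  rw [max_eq_left, min_eq_right zero_le_one]
  exact le_trans (min_le_right _ _) (by linarith)

lemma tent_support {n : ℕ} {t : ℝ} (h : tent n t ≠ 0) :
    2*(n:ℝ) - 1 < t ∧ t < 2*(n:ℝ) + 2 := by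
  constructor
  · by_contra hc; exact h (tent_eq_zero_left (not_lt.1 hc))
  · by_contra hc; exact h (tent_eq_zero_right (not_lt.1 hc))

/-- Glue a sequence of functions on the unit interval into one function on ℝ. -/
lemma exists_glue (γ : ℕ → C(unitInterval, ℝ)) :
    ∃ g : C(ℝ, ℝ), ∀ (n : ℕ) (s : unitInterval), g (2*(n:ℝ) + (s:ℝ)) = γ n s := by
  set u : ℕ → ℝ → ℝ := fun n t => tent n t * γ n (projIcc 0 1 zero_le_one (t - 2*(n:ℝ))) with hu
  have hucont : ∀ n, Continuous (u n) := by
    intro n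
    exact (tent_continuous n).mul
      ((γ n).continuous.comp (continuous_projIcc.comp (by fun_prop)))
  have husupp : ∀ n t, u n t ≠ 0 → 2*(n:ℝ) - 1 < t ∧ t < 2*(n:ℝ) + 2 := by
    intro n t h
    have : tent n t ≠ 0 := fun h0 => h (by simp [hu, h0])
    exact tent_support this
  have hlf : LocallyFinite fun n => support (u n) := by
    intro t
    refine ⟨Ioo (t-1) (t+1), Ioo_mem_nhds (by linarith) (by linarith), ?_⟩
    obtain ⟨N, hN⟩ := exists_nat_ge ((t + 2)/2)
    refine (Set.finite_Iio N).subset ?_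
    rintro n ⟨s, hs1, hs2⟩
    have h1 := (husupp n s hs1).1
    have h3 : s < t + 1 := hs2.2
    have : (n:ℝ) < (t+2)/2 := by linarith
    have : (n:ℝ) < (N:ℝ) := lt_of_lt_of_le this hN
    exact_mod_cast this
  refine ⟨⟨fun t => ∑ᶠ n, u n t, continuous_finsum hucont hlf⟩, ?_⟩
  intro n s
  have hs0 : (0:ℝ) ≤ (s:ℝ) := s.2.1
  have hs1 : (s:ℝ) ≤ 1 := s.2.2
  have hz : ∀ m : ℕ, m ≠ n → u m (2*(n:ℝ) + (s:ℝ)) = 0 := by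
    intro m hm
    rcases lt_or_gt_of_ne hm with h | h
    · have : (m:ℝ) + 1 ≤ (n:ℝ) := by exact_mod_cast h
      have := tent_eq_zero_right (n := m) (t := 2*(n:ℝ) + (s:ℝ)) (by linarith)
      simp [hu, this]
    · have : (n:ℝ) + 1 ≤ (m:ℝ) := by exact_mod_cast h
      have := tent_eq_zero_left (n := m) (t := 2*(n:ℝ) + (s:ℝ)) (by linarith)
      simp [hu, this]
  show ∑ᶠ m, u m (2*(n:ℝ) + (s:ℝ)) = γ n s
  rw [finsum_eq_single _ n hz]
  have h1 : tent n (2*(n:ℝ) + (s:ℝ)) = 1 := tent_eq_one (by linarith) (by linarith)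
  have h2 : (2*(n:ℝ) + (s:ℝ)) - 2*(n:ℝ) = (s:ℝ) := by ring
  simp only [hu, h1, h2, one_mul]
  congr 1
  rw [projIcc_of_mem zero_le_one s.2]

/-- Dugundji-type extension operator for a compact subset of a metric space. -/
theorem exists_ext_op_metric {M : Type*} [MetricSpace M] (K : Set M) (hK : IsCompact K) :
    ∃ E : C(↥K, ℝ) →ₗ[ℝ] C(M, ℝ),
      (∀ (f : C(↥K, ℝ)) (x : M) (hx : x ∈ K), E f x = f ⟨x, hx⟩) ∧
      (∀ x : M, @Continuous _ _ (ptTop ↥K) _ fun f : C(↥K, ℝ) => E f x) := by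
  classical
  rcases K.eq_empty_or_nonempty with hKe | hKne
  · refine ⟨0, ?_, ?_⟩
    · intro f x hx; rw [hKe] at hx; exact absurd hx (notMem_empty x)
    · intro x
      exact (@continuous_const _ _ (ptTop ↥K) _ (0:ℝ))
  have hKcl : IsClosed K := hK.isClosed
  set U : Set M := Kᶜ with hUdef
  set r : ↥U → ℝ := fun c => infDist (c : M) K / 2 with hr
  have hrpos : ∀ c : ↥U, 0 < r c := fun c =>
    half_pos ((hKcl.notMem_iff_infDist_pos hKne).1 c.2)
  have h2r : ∀ c : ↥U, infDist (c : M) K = 2 * r c := by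
    intro c; simp only [hr]; ring
  set W : ↥U → Set ↥U := fun c => {x : ↥U | dist (x : M) (c : M) < r c} with hW
  have hWopen : ∀ c, IsOpen (W c) := fun c =>
    isOpen_lt (continuous_subtype_val.dist continuous_const) continuous_const
  have hWcov : (univ : Set ↥U) ⊆ ⋃ c, W c := fun x _ =>
    mem_iUnion.2 ⟨x, by simp [hW, hrpos x]⟩
  obtain ⟨p, hp⟩ := PartitionOfUnity.exists_isSubordinate isClosed_univ W hWopen hWcov
  have ha : ∀ c : ↥U, ∃ y : ↥K, infDist (c : M) K = dist (c : M) (y : M) := by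
    intro c
    obtain ⟨y, hyK, hy⟩ := hK.exists_infDist_eq_dist hKne (c : M)
    exact ⟨⟨y, hyK⟩, hy⟩
  choose a hadist using ha
  have hpt : ∀ z : ↥U, {i : ↥U | p i z ≠ 0}.Finite := by
    intro z
    simpa [Function.mem_support] using p.locallyFinite.point_finite z
  have hin : ∀ (i z : ↥U), p i z ≠ 0 → dist (z : M) (i : M) < r i := by
    intro i z hz
    exact hp i (subset_closure (Function.mem_support.2 hz))
  set Φ : C(↥K, ℝ) → M → ℝ := fun f x =>
    if hx : x ∈ K then f ⟨x, hx⟩ else ∑ᶠ i : ↥U, p i ⟨x, hx⟩ * f (a i) with hΦ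
  have hfin : ∀ (z : ↥U) (h : ↥U → ℝ),
      ∑ᶠ i, p i z * h i = ∑ i ∈ (hpt z).toFinset, p i z * h i := by
    intro z h
    refine finsum_eq_finset_sum_of_support_subset _ ?_
    intro i hi
    rw [Function.mem_support] at hi
    have : p i z ≠ 0 := left_ne_zero_of_mul hi
    simpa using this
  have hpos : ∀ (f : C(↥K, ℝ)) (x : M) (hx : x ∈ K), Φ f x = f ⟨x, hx⟩ := by
    intro f x hx
    simp only [hΦ]
    rw [dif_pos hx]
  have hneg : ∀ (f : C(↥K, ℝ)) (x : M) (hx : x ∉ K),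
      Φ f x = ∑ i ∈ (hpt ⟨x, hx⟩).toFinset, p i ⟨x, hx⟩ * f (a i) := by
    intro f x hx
    simp only [hΦ]
    rw [dif_neg hx]
    exact hfin _ _
  have hsum1 : ∀ z : ↥U, ∑ i ∈ (hpt z).toFinset, p i z = 1 := by
    intro z
    have h1 : ∑ᶠ i, p i z = 1 := p.sum_eq_one (mem_univ z)
    have h2 : ∑ᶠ i, p i z = ∑ i ∈ (hpt z).toFinset, p i z := by
      refine finsum_eq_finset_sum_of_support_subset _ ?_
      intro i hi
      rw [Function.mem_support] at hi
      simpa using hi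
    rw [← h2, h1]
  haveI : CompactSpace ↥K := isCompact_iff_compactSpace.mp hK
  have hΦcont : ∀ f : C(↥K, ℝ), Continuous (Φ f) := by
    intro f
    rw [continuous_iff_continuousAt]
    intro x
    by_cases hx : x ∈ K
    · have huc := Metric.uniformContinuous_iff.1
        (CompactSpace.uniformContinuous_of_continuous f.continuous)
      rw [Metric.continuousAt_iff]
      intro ε hε
      obtain ⟨δ', hδ', hfδ⟩ := huc (ε/2) (half_pos hε)
      refine ⟨δ'/5, by positivity, ?_⟩
      intro y hyd
      rw [hpos f x hx]
      by_cases hy : y ∈ K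
      · rw [hpos f y hy]
        refine lt_of_lt_of_le (hfδ ?_) (by linarith)
        show dist (⟨y, hy⟩ : ↥K) ⟨x, hx⟩ < δ'
        rw [Subtype.dist_eq]
        exact lt_of_lt_of_le hyd (by linarith)
      · rw [hneg f y hy]
        set z : ↥U := ⟨y, hy⟩ with hz
        rw [Real.dist_eq]
        have hstep : ∀ i ∈ (hpt z).toFinset,
            p i z * |f (a i) - f ⟨x, hx⟩| ≤ p i z * (ε/2) := by
          intro i hi
          simp only [Set.Finite.mem_toFinset, Set.mem_setOf_eq] at hi
          have hdzi : dist (y : M) (i : M) < r i := hin i z hi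
          have hiK : infDist (i : M) K ≤ dist (i : M) x := infDist_le_dist_of_mem hx
          have hd : dist y x < δ'/5 := hyd
          have htri : dist (i : M) x ≤ dist (i : M) y + dist y x := dist_triangle _ _ _
          have hiy : dist (i : M) y = dist y (i : M) := dist_comm _ _
          have hri : r i < δ'/5 := by
            have h2 := h2r i
            rw [hiy] at htri
            linarith
          have hai : dist ((a i : M)) (i : M) = infDist (i : M) K := by
            rw [dist_comm]; exact (hadist i).symm
          have hax : dist ((a i : M)) x < δ' := by
            have h4 : dist ((a i : M)) x ≤
                dist ((a i : M)) (i : M) + dist (i : M) y + dist y x :=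
              dist_triangle4 _ _ _ _
            rw [hai, h2r i, hiy] at h4
            linarith
          have habs : |f (a i) - f ⟨x, hx⟩| ≤ ε/2 := by
            have h5 := hfδ (a := a i) (b := ⟨x, hx⟩) (by rw [Subtype.dist_eq]; exact hax)
            rw [Real.dist_eq] at h5
            exact h5.le
          exact mul_le_mul_of_nonneg_left habs (p.nonneg i z)
        have hsplit : ∑ i ∈ (hpt z).toFinset, p i z * (f (a i) - f ⟨x, hx⟩)
            = (∑ i ∈ (hpt z).toFinset, p i z * f (a i)) - f ⟨x, hx⟩ := by
          simp_rw [mul_sub]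
          rw [Finset.sum_sub_distrib, ← Finset.sum_mul, hsum1 z, one_mul]
        calc |(∑ i ∈ (hpt z).toFinset, p i z * f (a i)) - f ⟨x, hx⟩|
            = |∑ i ∈ (hpt z).toFinset, p i z * (f (a i) - f ⟨x, hx⟩)| := by rw [hsplit]
          _ ≤ ∑ i ∈ (hpt z).toFinset, |p i z * (f (a i) - f ⟨x, hx⟩)| :=
              Finset.abs_sum_le_sum_abs _ _
          _ ≤ ∑ i ∈ (hpt z).toFinset, p i z * (ε/2) := by
              refine Finset.sum_le_sum fun i hi => ?_
              rw [abs_mul, abs_of_nonneg (p.nonneg i z)]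
              exact hstep i hi
          _ = ε/2 := by rw [← Finset.sum_mul, hsum1 z, one_mul]
          _ < ε := by linarith
    · have hUopen : IsOpen U := hKcl.isOpen_compl
      have hsub : ContinuousOn (Φ f) U := by
        rw [continuousOn_iff_continuous_restrict]
        have hres : U.domRestrict (Φ f) = fun z : ↥U => ∑ᶠ i, p i z * f (a i) := by
          funext z
          show Φ f z = _
          simp only [hΦ]
          rw [dif_neg z.2]
        rw [hres]
        refine continuous_finsum (fun i => ((p i).continuous.mul continuous_const)) ?_
        refine p.locallyFinite.subset fun i z hz => ?_
        rw [Function.mem_support] at hz ⊢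
        exact left_ne_zero_of_mul hz
      exact hsub.continuousAt (hUopen.mem_nhds hx)
  refine ⟨{ toFun := fun f => ⟨Φ f, hΦcont f⟩,
            map_add' := ?_, map_smul' := ?_ }, ?_, ?_⟩
  · intro f g
    ext x
    show Φ (f + g) x = Φ f x + Φ g x
    by_cases hx : x ∈ K
    · rw [hpos _ x hx, hpos _ x hx, hpos _ x hx]; rfl
    · rw [hneg _ x hx, hneg _ x hx, hneg _ x hx, ← Finset.sum_add_distrib]
      refine Finset.sum_congr rfl fun i _ => ?_
      simp [mul_add]
  · intro c f
    ext x
    show Φ (c • f) x = c * Φ f x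
    by_cases hx : x ∈ K
    · rw [hpos _ x hx, hpos _ x hx]; rfl
    · rw [hneg _ x hx, hneg _ x hx, Finset.mul_sum]
      refine Finset.sum_congr rfl fun i _ => ?_
      simp only [ContinuousMap.smul_apply, smul_eq_mul]
      ring
  · intro f x hx
    exact hpos f x hx
  · intro x
    by_cases hx : x ∈ K
    · have heq : (fun f : C(↥K, ℝ) => Φ f x) = fun f => f ⟨x, hx⟩ := by
        funext f; exact hpos f x hx
      show @Continuous _ _ (ptTop ↥K) _ fun f : C(↥K, ℝ) => Φ f x
      rw [heq]
      exact evalCont _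
    · have heq : (fun f : C(↥K, ℝ) => Φ f x) =
          fun f => ∑ i ∈ (hpt ⟨x, hx⟩).toFinset, p i ⟨x, hx⟩ * f (a i) := by
        funext f; exact hneg f x hx
      show @Continuous _ _ (ptTop ↥K) _ fun f : C(↥K, ℝ) => Φ f x
      rw [heq]
      letI := ptTop ↥K
      exact continuous_finset_sum _ fun i _ => continuous_const.mul (evalCont (a i))

theorem exists_ext_op_metrizable (M : Type*) [TopologicalSpace M]
    [TopologicalSpace.MetrizableSpace M] (K : Set M) (hK : IsCompact K) :
    ∃ E : C(↥K, ℝ) →ₗ[ℝ] C(M, ℝ),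
      (∀ (f : C(↥K, ℝ)) (x : M) (hx : x ∈ K), E f x = f ⟨x, hx⟩) ∧
      (∀ x : M, @Continuous _ _ (ptTop ↥K) _ fun f : C(↥K, ℝ) => E f x) := by
  letI : MetricSpace M := TopologicalSpace.metrizableSpaceMetric M
  exact exists_ext_op_metric K hK

lemma dense_of_le {α : Type*} {t1 t2 : TopologicalSpace α} (hle : t1 ≤ t2) {s : Set α}
    (hd : @Dense α t1 s) : @Dense α t2 s := by
  intro x
  rw [@mem_closure_iff α t2 x s]
  intro o ho hxo
  have ho1 : @IsOpen α t1 o := by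
    rw [TopologicalSpace.le_def] at hle
    exact hle o ho
  exact (@mem_closure_iff α t1 x s).1 (hd x) o ho1 hxo

lemma co_le_ptTop (A : Type*) [TopologicalSpace A] :
    (ContinuousMap.compactOpen : TopologicalSpace C(A, ℝ)) ≤ ptTop A := by
  rw [ptTop, ← continuous_iff_le_induced]
  exact continuous_pi fun a => ContinuousEvalConst.continuous_eval_const a

theorem metrizable_of_ldom {K : Type*} [TopologicalSpace K] [CompactSpace K] [T2Space K]
    (h : LDominates unitInterval K) : TopologicalSpace.MetrizableSpace K := by
  obtain ⟨L, hLc, hLs⟩ := h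
  obtain ⟨D0, hD0c, hD0d⟩ := TopologicalSpace.exists_countable_dense C(unitInterval, ℝ)
  have hd1 : @Dense _ (ptTop unitInterval) D0 := dense_of_le (co_le_ptTop _) hD0d
  have hDc : (L '' D0).Countable := hD0c.image L
  have hDd : @Dense _ (ptTop K) (L '' D0) := by
    letI := ptTop unitInterval; letI := ptTop K
    exact DenseRange.dense_image hLs.denseRange hLc hd1
  haveI : Nonempty C(K, ℝ) := ⟨0⟩
  have hDne : (L '' D0).Nonempty := by
    letI := ptTop K
    exact hDd.nonempty
  obtain ⟨d, hdr⟩ := hDc.exists_eq_range hDne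
  haveI : NormalSpace K := inferInstance
  set Emb : K → (ℕ → ℝ) := fun x i => d i x with hEmbDef
  have hEc : Continuous Emb := continuous_pi fun i => (d i).continuous
  have hEinj : Injective Emb := by
    intro x y hxy
    by_contra hne
    obtain ⟨f, hf0, hf1, _⟩ := exists_continuous_zero_one_of_isClosed
      (isClosed_singleton (x := x)) (isClosed_singleton (x := y))
      (by simpa [Set.disjoint_singleton] using hne)
    set V : Set C(K, ℝ) := {g : C(K, ℝ) | g x < 1/2 ∧ 1/2 < g y} with hVdef
    have hV : @IsOpen C(K, ℝ) (ptTop K) V := by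
      rw [ptTop]
      have : V = (fun g : C(K,ℝ) => (g : K → ℝ)) ⁻¹'
          {v : K → ℝ | v x < 1/2 ∧ 1/2 < v y} := rfl
      rw [this]
      refine isOpen_induced ?_
      refine IsOpen.inter ?_ ?_
      · exact isOpen_lt (continuous_apply x) continuous_const
      · exact isOpen_lt continuous_const (continuous_apply y)
    have hfV : f ∈ V := by
      constructor
      · show f x < 1/2
        have : f x = 0 := hf0 rfl
        rw [this]; norm_num
      · show 1/2 < f y
        have : f y = 1 := hf1 rfl
        rw [this]; norm_num
    have hmem : f ∈ @closure _ (ptTop K) (L '' D0) := hDd f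
    obtain ⟨g, hgV, hgD⟩ := (@mem_closure_iff _ (ptTop K) f (L '' D0)).1 hmem V hV hfV
    rw [hdr] at hgD
    obtain ⟨i, rfl⟩ := hgD
    have h1 : d i x = d i y := congrFun hxy i
    rw [hVdef] at hgV
    obtain ⟨ha, hb⟩ := hgV
    rw [h1] at ha
    linarith
  have hemb := (hEc.isClosedEmbedding hEinj).isEmbedding
  exact hemb.metrizableSpace

end Stmt9

/-- the reals ℓ-dominate any submetrizable Tychonoff space with a k_ω
sequence of compacta each ℓ-dominated by the unit interval. -/
theorem real_ellDominates_of_kOmega_interval_dominated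
    (X : Type*) [TopologicalSpace X] [T35Space X]
    (hsub : Submetrizable X) (K : ℕ → Set X) (hK : IsKOmegaSeq X K)
    (hdom : ∀ n, LDominates unitInterval ↥(K n)) :
    LDominates ℝ X := by
  classical
  obtain ⟨hKc, hKmono, hKcof, hKclosed⟩ := hK
  have hmono : ∀ {m n : ℕ}, m ≤ n → K m ⊆ K n := fun {m n} h =>
    monotone_nat_of_le_succ hKmono h
  have hcov : ∀ x : X, ∃ n, x ∈ K n := fun x => by
    obtain ⟨n, hn⟩ := hKcof {x} isCompact_singleton
    exact ⟨n, hn rfl⟩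
  have hCS : ∀ n, CompactSpace ↥(K n) := fun n => isCompact_iff_compactSpace.mp (hKc n)
  have hmetr : ∀ n, TopologicalSpace.MetrizableSpace ↥(K n) := fun n =>
    @Stmt9.metrizable_of_ldom ↥(K n) _ (hCS n) _ (hdom n)
  choose T hTc hTs using hdom
  -- extension operators between consecutive compacta
  have hext : ∀ n, ∃ E : C(↥(K n), ℝ) →ₗ[ℝ] C(↥(K (n+1)), ℝ),
      (∀ (h : C(↥(K n), ℝ)) (x : X) (hx : x ∈ K n) (hx' : x ∈ K (n+1)),
        E h ⟨x, hx'⟩ = h ⟨x, hx⟩) ∧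
      (∀ z : ↥(K (n+1)), @Continuous _ _ (ptTop ↥(K n)) _ fun f => E f z) := by
    intro n
    haveI := hCS (n+1)
    haveI := hmetr (n+1)
    set A : Set ↥(K (n+1)) := Subtype.val ⁻¹' (K n) with hA
    have hAcomp : IsCompact A :=
      (((hKc n).isClosed.preimage continuous_subtype_val)).isCompact
    obtain ⟨E0, hE0ext, hE0cont⟩ := Stmt9.exists_ext_op_metrizable ↥(K (n+1)) A hAcomp
    set φc : C(↥A, ↥(K n)) := ⟨fun z => ⟨z.1.1, z.2⟩,
      Continuous.subtype_mk (continuous_subtype_val.comp continuous_subtype_val) _⟩ with hφc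
    refine ⟨E0 ∘ₗ Stmt9.pullbackL φc, ?_, ?_⟩
    · intro h x hx hx'
      have hmem : (⟨x, hx'⟩ : ↥(K (n+1))) ∈ A := hx
      rw [LinearMap.comp_apply, hE0ext (Stmt9.pullbackL φc h) ⟨x, hx'⟩ hmem]
      rfl
    · intro z
      exact Stmt9.contComp (hE0cont z) (Stmt9.pullbackL_ptCont φc)
  choose E' hE'ext hE'cont using hext
  -- restriction operators
  set res : ∀ n, C(↥(K (n+1)), ℝ) →ₗ[ℝ] C(↥(K n), ℝ) := fun n =>
    Stmt9.pullbackL ⟨fun z => ⟨z.1, hKmono n z.2⟩,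
      Continuous.subtype_mk continuous_subtype_val _⟩ with hresdef
  set rK : ∀ n, C(X, ℝ) →ₗ[ℝ] C(↥(K n), ℝ) := fun n =>
    Stmt9.pullbackL ⟨Subtype.val, continuous_subtype_val⟩ with hrKdef
  set ρ : ∀ n : ℕ, C(ℝ, ℝ) →ₗ[ℝ] C(unitInterval, ℝ) := fun n =>
    Stmt9.pullbackL ⟨fun s => 2*(n:ℝ) + (s:ℝ), by fun_prop⟩ with hρdef
  -- the tower of maps
  set Φ : ∀ n, C(ℝ, ℝ) →ₗ[ℝ] C(↥(K n), ℝ) := fun n => Nat.rec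
    ((T 0) ∘ₗ (ρ 0))
    (fun n Φn => (E' n) ∘ₗ Φn +
      (LinearMap.id - (E' n) ∘ₗ (res n)) ∘ₗ ((T (n+1)) ∘ₗ (ρ (n+1)))) n with hΦdef
  have hΦ0 : Φ 0 = (T 0) ∘ₗ (ρ 0) := rfl
  have hΦs : ∀ n, Φ (n+1) = (E' n) ∘ₗ (Φ n) +
      (LinearMap.id - (E' n) ∘ₗ (res n)) ∘ₗ ((T (n+1)) ∘ₗ (ρ (n+1))) := fun n => rfl
  -- compatibility
  have hcomp1 : ∀ n (g : C(ℝ,ℝ)) (x : X) (hx : x ∈ K n) (hx' : x ∈ K (n+1)),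
      Φ (n+1) g ⟨x, hx'⟩ = Φ n g ⟨x, hx⟩ := by
    intro n g x hx hx'
    have e1 : (E' n) (Φ n g) ⟨x, hx'⟩ = Φ n g ⟨x, hx⟩ := hE'ext n _ x hx hx'
    have e2 : (E' n) ((res n) ((T (n+1)) ((ρ (n+1)) g))) ⟨x, hx'⟩
        = (T (n+1)) ((ρ (n+1)) g) ⟨x, hx'⟩ := by
      rw [hE'ext n _ x hx hx']
      exact congrArg _ (Subtype.ext rfl)
    rw [hΦs n]
    simp only [LinearMap.add_apply, LinearMap.comp_apply, LinearMap.sub_apply,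
      LinearMap.id_apply, ContinuousMap.add_apply, ContinuousMap.sub_apply]
    rw [e1, e2]
    ring
  have hcompat : ∀ (m n : ℕ) (h : m ≤ n) (g : C(ℝ,ℝ)) (x : X) (hx : x ∈ K m)
      (hx' : x ∈ K n), Φ n g ⟨x, hx'⟩ = Φ m g ⟨x, hx⟩ := by
    intro m n h
    induction n, h using Nat.le_induction with
    | base => intro g x hx hx'; rfl
    | succ n hmn ih =>
      intro g x hx hx'
      have hxn : x ∈ K n := hmono hmn hx
      rw [hcomp1 n g x hxn hx']
      exact ih g x hx hxn
  -- the glued map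
  set ch : X → ℕ := fun x => Classical.choose (hcov x) with hch
  have hchs : ∀ x, x ∈ K (ch x) := fun x => Classical.choose_spec (hcov x)
  set Lfun : C(ℝ,ℝ) → X → ℝ := fun g x => Φ (ch x) g ⟨x, hchs x⟩ with hLfun
  have hLval : ∀ g m (x : X) (hx : x ∈ K m), Lfun g x = Φ m g ⟨x, hx⟩ := by
    intro g m x hx
    have hmax : x ∈ K (max (ch x) m) := hmono le_sup_left (hchs x)
    have h1 := hcompat (ch x) (max (ch x) m) le_sup_left g x (hchs x) hmax
    have h2 := hcompat m (max (ch x) m) le_sup_right g x hx hmax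
    show Φ (ch x) g ⟨x, hchs x⟩ = Φ m g ⟨x, hx⟩
    rw [← h1, h2]
  have hLcont : ∀ g, Continuous (Lfun g) := by
    intro g
    rw [continuous_iff_isClosed]
    intro C hC
    apply hKclosed
    intro m
    refine ⟨Subtype.val '' ((Φ m g) ⁻¹' C), ?_, ?_⟩
    · have h1 : IsCompact ((Φ m g) ⁻¹' C : Set ↥(K m)) := by
        haveI := hCS m
        exact (hC.preimage (Φ m g).continuous).isCompact
      exact (h1.image continuous_subtype_val).isClosed
    · ext x
      simp only [Set.mem_inter_iff, Set.mem_preimage, Set.mem_image]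
      constructor
      · rintro ⟨hxC, hxm⟩
        refine ⟨⟨⟨x, hxm⟩, ?_, rfl⟩, hxm⟩
        show Φ m g ⟨x, hxm⟩ ∈ C
        rw [← hLval g m x hxm]
        exact hxC
      · rintro ⟨⟨z, hz, rfl⟩, hxm⟩
        refine ⟨?_, hxm⟩
        show Lfun g z.1 ∈ C
        rw [hLval g m z.1 z.2]
        exact hz
  set L : C(ℝ, ℝ) →ₗ[ℝ] C(X, ℝ) :=
    { toFun := fun g => ⟨Lfun g, hLcont g⟩,
      map_add' := by
        intro g g'
        ext x
        show Lfun (g + g') x = Lfun g x + Lfun g' x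
        rw [hLval _ (ch x) x (hchs x), hLval _ (ch x) x (hchs x),
          hLval _ (ch x) x (hchs x), map_add]
        rfl
      map_smul' := by
        intro c g
        ext x
        show Lfun (c • g) x = c * Lfun g x
        rw [hLval _ (ch x) x (hchs x), hLval _ (ch x) x (hchs x), map_smul]
        rfl } with hLdef
  -- pointwise continuity of the tower
  have hev : ∀ n, @Continuous _ _ (ptTop ℝ) (ptTop ↥(K n)) (Φ n) := by
    intro n
    induction n with
    | zero =>
      have h0 : @Continuous _ _ (ptTop ℝ) (ptTop ↥(K 0))
          ((T 0) ∘ (ρ 0)) := Stmt9.contComp (hTc 0) (Stmt9.pullbackL_ptCont _)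
      exact h0
    | succ n ih =>
      rw [Stmt9.ptCont_iff]
      intro z
      have hexpr : (fun g => Φ (n+1) g z) = fun g =>
          (E' n) (Φ n g) z + ((T (n+1)) ((ρ (n+1)) g) z
            - (E' n) ((res n) ((T (n+1)) ((ρ (n+1)) g))) z) := by
        funext g
        rw [hΦs n]
        simp only [LinearMap.add_apply, LinearMap.comp_apply, LinearMap.sub_apply,
          LinearMap.id_apply, ContinuousMap.add_apply, ContinuousMap.sub_apply]
      rw [hexpr]
      have hTρ : @Continuous _ _ (ptTop ℝ) (ptTop ↥(K (n+1)))
          fun g => (T (n+1)) ((ρ (n+1)) g) :=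
        Stmt9.contComp (hTc (n+1)) (Stmt9.pullbackL_ptCont _)
      have c1 : @Continuous _ _ (ptTop ℝ) _ fun g => (E' n) (Φ n g) z :=
        Stmt9.contComp (hE'cont n z) ih
      have c2 : @Continuous _ _ (ptTop ℝ) _ fun g => (T (n+1)) ((ρ (n+1)) g) z :=
        (Stmt9.ptCont_iff _).1 hTρ z
      have c3 : @Continuous _ _ (ptTop ℝ) _
          fun g => (E' n) ((res n) ((T (n+1)) ((ρ (n+1)) g))) z :=
        Stmt9.contComp (hE'cont n z) (Stmt9.contComp (Stmt9.pullbackL_ptCont _) hTρ)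
      exact Stmt9.contAdd c1 (Stmt9.contSub c2 c3)
  refine ⟨L, ?_, ?_⟩
  · rw [Stmt9.ptCont_iff]
    intro x
    have : (fun g => L g x) = fun g => Φ (ch x) g ⟨x, hchs x⟩ := rfl
    rw [this]
    exact (Stmt9.ptCont_iff _).1 (hev (ch x)) _
  · intro f
    set γ : ℕ → C(unitInterval, ℝ) := fun n => Nat.rec
      (surjInv (hTs 0) (rK 0 f))
      (fun n _ => surjInv (hTs (n+1)) (rK (n+1) f - (E' n) (rK n f))) n with hγ
    obtain ⟨g, hg⟩ := Stmt9.exists_glue γ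
    have hρg : ∀ n, (ρ n) g = γ n := by
      intro n
      ext s
      show g (2*(n:ℝ) + (s:ℝ)) = γ n s
      exact hg n s
    have hTγ0 : (T 0) (γ 0) = rK 0 f := surjInv_eq (hTs 0) _
    have hTγs : ∀ n, (T (n+1)) (γ (n+1)) = rK (n+1) f - (E' n) (rK n f) :=
      fun n => surjInv_eq (hTs (n+1)) _
    have hres_rK : ∀ n, (res n) (rK (n+1) f) = rK n f := fun n => rfl
    have hres_E : ∀ n (u : C(↥(K n), ℝ)), (res n) ((E' n) u) = u := by
      intro n u
      ext z
      show (E' n) u (⟨z.1, hKmono n z.2⟩ : ↥(K (n+1))) = u z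
      rw [hE'ext n u z.1 z.2 (hKmono n z.2)]
    have hind : ∀ n, Φ n g = rK n f := by
      intro n
      induction n with
      | zero =>
        have : Φ 0 g = (T 0) ((ρ 0) g) := rfl
        rw [this, hρg 0, hTγ0]
      | succ n ih =>
        rw [hΦs n]
        simp only [LinearMap.add_apply, LinearMap.comp_apply, LinearMap.sub_apply,
          LinearMap.id_apply]
        rw [hρg (n+1), hTγs n, ih]
        have h1 : (res n) (rK (n+1) f - (E' n) (rK n f)) = 0 := by
          rw [map_sub, hres_rK n, hres_E n, sub_self]
        rw [h1, map_zero]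
        abel
    use g
    ext x
    show Lfun g x = f x
    rw [hLval g (ch x) x (hchs x), hind (ch x)]
    rfl

end
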